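/- Let N ≥ 1 be an integer. Then for every τ in the complex upper half-plane ℍ, ∏_{w=1}^{N−1} g_{(0, w/N)}^{12}(τ) = N^{12} · Δ(Nτ)/Δ(τ), where the left-hand side is the empty product (equal to 1) when N = 1, and Δ(τ) = (2πi)^{12} · q_τ · ∏_{n=1}^∞ (1 − q_τ^n)^{24} with q_τ = e^{2πiτ}. -/

import Mathlib

open Complex Finset Filter


private lemma sumLog {f : ℕ → ℂ} (hf : Summable f) : Summable (fun n => Complex.log (1 + f n)) := by
  have h0 : Tendsto (fun n => ‖f n‖) atTop (nhds 0) := by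
    simpa using hf.tendsto_atTop_zero.norm
  have hev : ∀ᶠ n in atTop, ‖Complex.log (1 + f n)‖ ≤ 3/2 * ‖f n‖ := by
    filter_upwards [h0.eventually (gt_mem_nhds (by norm_num : (0:ℝ) < 1/2))] with n hn
    exact Complex.norm_log_one_add_half_le_self hn.le
  exact Summable.of_norm_bounded_eventually_nat (hf.norm.mul_left (3/2)) hev

private lemma prodExp {f : ℕ → ℂ} (hf : Summable f) (h : ∀ n, ‖f n‖ < 1) :
    Multipliable (fun n => 1 + f n) ∧
      (∏' n, (1 + f n)) = Complex.exp (∑' n, Complex.log (1 + f n)) := by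
  have hne : ∀ n, 1 + f n ≠ 0 := by
    intro n hn
    have : f n = -1 := by linear_combination hn
    have h2 := h n
    rw [this] at h2
    simp at h2
  refine ⟨Complex.multipliable_of_summable_log (sumLog hf), ?_⟩
  exact (Complex.cexp_tsum_eq_tprod hne (sumLog hf)).symm

private lemma geomAux {c q : ℂ} (hc : ‖c‖ ≤ 1) (hq : ‖q‖ < 1) :
    Summable (fun n : ℕ => -(c * q ^ (n+1))) ∧ ∀ n : ℕ, ‖-(c * q ^ (n+1))‖ < 1 := by
  constructor
  · apply Summable.congr (((summable_geometric_of_norm_lt_one hq).mul_left (-(c*q))))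
    intro n; ring
  · intro n
    have h1 : ‖q‖ ^ (n+1) < 1 := pow_lt_one₀ (norm_nonneg q) hq (Nat.succ_ne_zero n)
    calc ‖-(c * q ^ (n+1))‖ = ‖c‖ * ‖q‖^(n+1) := by simp [norm_mul, norm_pow]
    _ ≤ 1 * ‖q‖^(n+1) := by gcongr
    _ < 1 := by simpa using h1

private lemma multGeom {c q : ℂ} (hc : ‖c‖ ≤ 1) (hq : ‖q‖ < 1) :
    Multipliable (fun n : ℕ => 1 - c * q ^ (n+1)) := by
  have := (prodExp (geomAux hc hq).1 (geomAux hc hq).2).1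
  apply this.congr; intro n; ring

private lemma tprodGeom_ne {c q : ℂ} (hc : ‖c‖ ≤ 1) (hq : ‖q‖ < 1) :
    (∏' n : ℕ, (1 - c * q ^ (n+1))) ≠ 0 := by
  have h2 := (prodExp (geomAux hc hq).1 (geomAux hc hq).2).2
  have h3 : (∏' n : ℕ, (1 - c * q ^ (n+1))) = ∏' n : ℕ, (1 + -(c * q ^ (n+1))) :=
    tprod_congr (fun n => by ring)
  rw [h3, h2]
  exact Complex.exp_ne_zero _

private lemma multPow {f : ℕ → ℂ} (hf : Multipliable f) (k : ℕ) :
    Multipliable (fun n => f n ^ k) ∧ (∏' n, f n ^ k) = (∏' n, f n) ^ k := by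
  induction k with
  | zero => exact ⟨by simpa using (multipliable_one : Multipliable (fun _ : ℕ => (1:ℂ))), by simpa using (tprod_one : ∏' (_ : ℕ), (1:ℂ) = 1)⟩
  | succ k ih =>
    constructor
    · exact ((ih.1.mul hf).congr (fun n => (pow_succ (f n) k).symm))
    · calc (∏' n, f n ^ (k+1)) = ∏' n, (f n ^ k * f n) := tprod_congr (fun n => pow_succ _ _)
      _ = (∏' n, f n ^ k) * ∏' n, f n := ih.1.tprod_mul hf
      _ = (∏' n, f n) ^ (k+1) := by rw [ih.2, pow_succ]

private lemma prodSwap {β : Type*} {s : Finset β} {f : β → ℕ → ℂ}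
    (h : ∀ w ∈ s, Multipliable (f w)) :
    Multipliable (fun n => ∏ w ∈ s, f w n) ∧
      (∏ w ∈ s, ∏' n, f w n) = ∏' n, ∏ w ∈ s, f w n := by
  classical
  induction s using Finset.induction with
  | empty => exact ⟨by simpa using (multipliable_one : Multipliable (fun _ : ℕ => (1:ℂ))), by simp⟩
  | @insert a s ha ih =>
    have h1 : Multipliable (f a) := h a (mem_insert_self a s)
    have h2 := ih (fun w hw => h w (mem_insert_of_mem hw))
    constructor
    · exact (h1.mul h2.1).congr (fun n => by rw [prod_insert ha])
    · rw [prod_insert ha, h2.2, ← h1.tprod_mul h2.1]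
      exact tprod_congr (fun n => (prod_insert (f := fun w => f w n) ha).symm)



private lemma prodRoots (N : ℕ) (hN : 1 ≤ N) (x : ℂ) :
    ∏ w ∈ Finset.range N, (1 - Complex.exp (2 * (Real.pi:ℂ) * Complex.I / N) ^ w * x)
      = 1 - x ^ N := by
  have hζ : IsPrimitiveRoot (Complex.exp (2 * (Real.pi:ℂ) * Complex.I / N)) N := by
    simpa using Complex.isPrimitiveRoot_exp N (by omega)
  have h := X_pow_sub_C_eq_prod hζ (by omega : 0 < N) (rfl : x ^ N = x ^ N)
  have h2 := congrArg (Polynomial.eval 1) h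
  simpa [Polynomial.eval_prod, mul_comm] using h2.symm

private lemma prodIco (N : ℕ) (hN : 1 ≤ N) (x : ℂ) (hx : 1 - x ≠ 0) :
    ∏ w ∈ Finset.Ico 1 N, (1 - Complex.exp (2 * (Real.pi:ℂ) * Complex.I / N) ^ w * x)
      = (1 - x ^ N) / (1 - x) := by
  set ζ := Complex.exp (2 * (Real.pi:ℂ) * Complex.I / N)
  have h0 : ∏ w ∈ Finset.range N, (1 - ζ ^ w * x)
      = (1 - x) * ∏ w ∈ Finset.Ico 1 N, (1 - ζ ^ w * x) := by
    rw [Finset.range_eq_Ico, Finset.prod_eq_prod_Ico_succ_bot (by omega : 0 < N)]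
    simp
  rw [eq_div_iff hx, mul_comm, ← h0, prodRoots N hN x]

private lemma keyProd (N : ℕ) (hN : 1 ≤ N) (x : ℂ) (hx : 1 - x ≠ 0) :
    ∏ w ∈ Finset.Ico 1 N,
      ((1 - Complex.exp (2 * (Real.pi:ℂ) * Complex.I / N) ^ w * x) *
        (1 - (Complex.exp (2 * (Real.pi:ℂ) * Complex.I / N) ^ w)⁻¹ * x))
      = ((1 - x ^ N) / (1 - x)) ^ 2 := by
  set ζ := Complex.exp (2 * (Real.pi:ℂ) * Complex.I / N) with hζdef
  have hζN : ζ ^ N = 1 := by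
    rw [hζdef, ← Complex.exp_nat_mul]
    have hNC : (N:ℂ) ≠ 0 := Nat.cast_ne_zero.mpr (by omega)
    have : (N:ℂ) * (2 * (Real.pi:ℂ) * Complex.I / N) = (1:ℤ) * (2 * (Real.pi:ℂ) * Complex.I) := by
      field_simp
      norm_num
    rw [this, Complex.exp_int_mul_two_pi_mul_I]
  have hinv : ∀ w ∈ Finset.Ico 1 N, (ζ ^ w)⁻¹ = ζ ^ (N - w) := by
    intro w hw
    rw [Finset.mem_Ico] at hw
    refine inv_eq_of_mul_eq_one_right ?_
    rw [← pow_add]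
    rw [Nat.add_sub_cancel' (le_of_lt hw.2)]
    exact hζN
  rw [Finset.prod_mul_distrib]
  have h2 : ∏ w ∈ Finset.Ico 1 N, (1 - (ζ ^ w)⁻¹ * x)
      = ∏ w ∈ Finset.Ico 1 N, (1 - ζ ^ w * x) := by
    rw [Finset.prod_congr rfl (fun w hw => by rw [hinv w hw])]
    refine Finset.prod_nbij' (fun w => N - w) (fun w => N - w) ?_ ?_ ?_ ?_ ?_
    · intro a ha; simp only [Finset.mem_Ico] at *; omega
    · intro a ha; simp only [Finset.mem_Ico] at *; omega
    · intro a ha; simp only [Finset.mem_Ico] at ha; omega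
    · intro a ha; simp only [Finset.mem_Ico] at ha; omega
    · intro a ha; rfl
  rw [h2, prodIco N hN x hx, sq]


/-- The Siegel function `g_{(r₁,r₂)}(τ)`, defined by the product expansion
`g_{(r₁,r₂)}(τ) = -q_τ^{B₂(r₁)/2} e^{πi r₂(r₁-1)} (1-q_z) ∏_{n≥1} (1-q_τ^n q_z)(1-q_τ^n q_z⁻¹)`
where `B₂(X) = X² - X + 1/6`, `q_τ = e^{2πiτ}` and `q_z = e^{2πiz}` with `z = r₁τ + r₂`. -/
noncomputable def siegelG (r : ℚ × ℚ) (τ : ℂ) : ℂ :=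
  -Complex.exp (2 * Real.pi * Complex.I * τ * (((r.1 : ℂ) ^ 2 - (r.1 : ℂ) + 1 / 6) / 2)) *
    Complex.exp (Real.pi * Complex.I * (r.2 : ℂ) * ((r.1 : ℂ) - 1)) *
    (1 - Complex.exp (2 * Real.pi * Complex.I * ((r.1 : ℂ) * τ + (r.2 : ℂ)))) *
    ∏' n : ℕ,
      ((1 - Complex.exp (2 * Real.pi * Complex.I * (((n : ℂ) + 1) * τ + ((r.1 : ℂ) * τ + (r.2 : ℂ))))) *
        (1 - Complex.exp (2 * Real.pi * Complex.I * (((n : ℂ) + 1) * τ - ((r.1 : ℂ) * τ + (r.2 : ℂ))))))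

/-- The discriminant function `Δ(τ) = (2πi)^{12} q_τ ∏_{n≥1} (1 - q_τ^n)^{24}`. -/
noncomputable def Delta (τ : ℂ) : ℂ :=
  (2 * Real.pi * Complex.I) ^ 12 * Complex.exp (2 * Real.pi * Complex.I * τ) *
    ∏' n : ℕ, (1 - Complex.exp (2 * Real.pi * Complex.I * ((n : ℂ) + 1) * τ)) ^ 24

private lemma siegel_eq (N w : ℕ) (hN : 1 ≤ N) (τ : ℂ) :
    siegelG (0, (w : ℚ) / (N : ℚ)) τ =
      -Complex.exp (2 * (Real.pi:ℂ) * Complex.I * τ * (1/12)) *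
        Complex.exp (-((Real.pi:ℂ) * Complex.I * w / N)) *
        (1 - Complex.exp (2 * (Real.pi:ℂ) * Complex.I / N) ^ w) *
        ∏' n : ℕ,
          ((1 - Complex.exp (2 * (Real.pi:ℂ) * Complex.I / N) ^ w
              * Complex.exp (2 * (Real.pi:ℂ) * Complex.I * τ) ^ (n+1)) *
           (1 - (Complex.exp (2 * (Real.pi:ℂ) * Complex.I / N) ^ w)⁻¹
              * Complex.exp (2 * (Real.pi:ℂ) * Complex.I * τ) ^ (n+1))) := by
  rw [siegelG]
  have c0 : (((0:ℚ) : ℂ)) = 0 := by norm_num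
  have cw : ((((w:ℚ) / (N:ℚ)) : ℚ) : ℂ) = (w:ℂ) / (N:ℂ) := by push_cast; ring
  congr 1
  · congr 1
    · congr 2
      · congr 1
        rw [c0]; ring
      · congr 1
        rw [cw, c0]; ring
    · congr 2
      rw [cw, c0]
      rw [show 2 * (Real.pi:ℂ) * Complex.I * (0 * τ + (w:ℂ)/(N:ℂ))
            = (w:ℂ) * (2 * (Real.pi:ℂ) * Complex.I / (N:ℂ)) from by ring]
      exact Complex.exp_nat_mul _ w
  · apply tprod_congr
    intro n
    congr 2
    · congr 1
      rw [cw, c0]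
      rw [show 2 * (Real.pi:ℂ) * Complex.I * (((n:ℂ) + 1) * τ + (0 * τ + (w:ℂ)/(N:ℂ)))
            = ((n + 1 : ℕ):ℂ) * (2 * (Real.pi:ℂ) * Complex.I * τ)
              + (w:ℂ) * (2 * (Real.pi:ℂ) * Complex.I / (N:ℂ)) from by push_cast; ring]
      rw [Complex.exp_add, Complex.exp_nat_mul, Complex.exp_nat_mul, mul_comm]
    · congr 1
      rw [cw, c0]
      rw [show 2 * (Real.pi:ℂ) * Complex.I * (((n:ℂ) + 1) * τ - (0 * τ + (w:ℂ)/(N:ℂ)))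
            = ((n + 1 : ℕ):ℂ) * (2 * (Real.pi:ℂ) * Complex.I * τ)
              + (w:ℂ) * (-(2 * (Real.pi:ℂ) * Complex.I / (N:ℂ))) from by push_cast; ring]
      rw [Complex.exp_add, Complex.exp_nat_mul, Complex.exp_nat_mul, Complex.exp_neg, inv_pow,
        mul_comm]


set_option maxHeartbeats 1600000 in
/-- For every integer `N ≥ 1` and every `τ ∈ ℍ`,
`∏_{w=1}^{N-1} g_{(0,w/N)}^{12}(τ) = N^{12} Δ(Nτ)/Δ(τ)`. -/
theorem prod_siegelG_eq_delta_quotient (N : ℕ) (hN : 1 ≤ N) (τ : UpperHalfPlane) :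
    ∏ w ∈ Finset.Ico 1 N, siegelG (0, (w : ℚ) / (N : ℚ)) (τ : ℂ) ^ 12 =
      (N : ℂ) ^ 12 * Delta ((N : ℂ) * (τ : ℂ)) / Delta (τ : ℂ) := by
  obtain ⟨M, rfl⟩ : ∃ M, N = M + 1 := ⟨N - 1, by omega⟩
  set N := M + 1 with hNdef
  set q : ℂ := Complex.exp (2 * (Real.pi:ℂ) * Complex.I * τ) with hqdef
  set ζ : ℂ := Complex.exp (2 * (Real.pi:ℂ) * Complex.I / N) with hζdef
  have hNC : (N:ℂ) ≠ 0 := Nat.cast_ne_zero.mpr (by omega)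
  have hq : ‖q‖ < 1 := by
    rw [hqdef, Complex.norm_exp]
    have him : (0:ℝ) < (τ:ℂ).im := τ.2
    have hre : (2 * (Real.pi:ℂ) * Complex.I * τ).re = -(2 * Real.pi * (τ:ℂ).im) := by
      simp [Complex.mul_re, Complex.mul_im]
      try ring
    rw [hre]
    apply Real.exp_lt_one_iff.mpr
    nlinarith [Real.pi_pos, him]
  have hζ1 : ‖ζ‖ = 1 := by
    rw [hζdef, Complex.norm_exp]
    have : (2 * (Real.pi:ℂ) * Complex.I / N).re = 0 := by
      rw [show 2 * (Real.pi:ℂ) * Complex.I / N = ((2 * Real.pi / N : ℝ):ℂ) * Complex.I from by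
        push_cast; ring]
      simp
    rw [this, Real.exp_zero]
  have hζw : ∀ w : ℕ, ‖ζ ^ w‖ ≤ 1 := fun w => by rw [norm_pow, hζ1, one_pow]
  have hζwi : ∀ w : ℕ, ‖(ζ ^ w)⁻¹‖ ≤ 1 := fun w => by
    rw [norm_inv, norm_pow, hζ1, one_pow, inv_one]
  have hQ : ‖q ^ N‖ < 1 := by
    rw [norm_pow]; exact pow_lt_one₀ (norm_nonneg q) hq (by omega)
  -- multipliability
  have hm1 : ∀ w : ℕ, Multipliable (fun n : ℕ => 1 - ζ ^ w * q ^ (n+1)) :=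
    fun w => multGeom (hζw w) hq
  have hm2 : ∀ w : ℕ, Multipliable (fun n : ℕ => 1 - (ζ ^ w)⁻¹ * q ^ (n+1)) :=
    fun w => multGeom (hζwi w) hq
  have hmD : ∀ w : ℕ, Multipliable
      (fun n : ℕ => (1 - ζ ^ w * q ^ (n+1)) * (1 - (ζ ^ w)⁻¹ * q ^ (n+1))) :=
    fun w => (hm1 w).mul (hm2 w)
  have hmq : Multipliable (fun n : ℕ => 1 - q ^ (n+1)) :=
    (multGeom (le_of_eq norm_one) hq).congr (fun n => by rw [one_mul])
  have hmQ : Multipliable (fun n : ℕ => 1 - (q ^ N) ^ (n+1)) :=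
    (multGeom (le_of_eq norm_one) hQ).congr (fun n => by rw [one_mul])
  have hPq : (∏' n : ℕ, (1 - q ^ (n+1))) ≠ 0 := by
    have h0 := tprodGeom_ne (le_of_eq (norm_one)) hq
    have h3 : (∏' n : ℕ, (1 - (1:ℂ) * q ^ (n+1))) = ∏' n : ℕ, (1 - q ^ (n+1)) :=
      tprod_congr (fun n => by rw [one_mul])
    rwa [h3] at h0
  -- Delta values
  have hDq : Delta τ = (2 * (Real.pi:ℂ) * Complex.I) ^ 12 * q *
      (∏' n : ℕ, (1 - q ^ (n+1))) ^ 24 := by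
    rw [Delta, ← (multPow hmq 24).2]
    refine congrArg (fun x => (2 * (Real.pi:ℂ) * Complex.I) ^ 12 * q * x) ?_
    apply tprod_congr
    intro n
    congr 2
    rw [show 2 * (Real.pi:ℂ) * Complex.I * ((n:ℂ) + 1) * τ
          = ((n + 1 : ℕ):ℂ) * (2 * (Real.pi:ℂ) * Complex.I * τ) from by push_cast; ring]
    exact Complex.exp_nat_mul _ _
  have hDQ : Delta ((N:ℂ) * τ) = (2 * (Real.pi:ℂ) * Complex.I) ^ 12 * q ^ N *
      (∏' n : ℕ, (1 - (q ^ N) ^ (n+1))) ^ 24 := by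
    rw [Delta, ← (multPow hmQ 24).2]
    refine congrArg₂ (· * ·) ?_ ?_
    · refine congrArg (fun x => (2 * (Real.pi:ℂ) * Complex.I) ^ 12 * x) ?_
      rw [show 2 * (Real.pi:ℂ) * Complex.I * ((N:ℂ) * τ)
            = (N:ℂ) * (2 * (Real.pi:ℂ) * Complex.I * τ) from by ring]
      exact Complex.exp_nat_mul _ _
    · apply tprod_congr
      intro n
      congr 2
      rw [show 2 * (Real.pi:ℂ) * Complex.I * ((n:ℂ) + 1) * ((N:ℂ) * τ)
            = (((n + 1) * N : ℕ):ℂ) * (2 * (Real.pi:ℂ) * Complex.I * τ) from by push_cast; ring]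
      rw [Complex.exp_nat_mul, ← hqdef, pow_mul, ← pow_mul, ← pow_mul, Nat.mul_comm]
  -- LHS decomposition
  have hsplit : ∏ w ∈ Finset.Ico 1 N, siegelG (0, (w : ℚ) / (N : ℚ)) (τ:ℂ) ^ 12 =
      (∏ w ∈ Finset.Ico 1 N, (-Complex.exp (2 * (Real.pi:ℂ) * Complex.I * τ * (1/12))) ^ 12) *
      (∏ w ∈ Finset.Ico 1 N, Complex.exp (-((Real.pi:ℂ) * Complex.I * w / N)) ^ 12) *
      (∏ w ∈ Finset.Ico 1 N, (1 - ζ ^ w) ^ 12) *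
      (∏ w ∈ Finset.Ico 1 N, (∏' n : ℕ,
        ((1 - ζ ^ w * q ^ (n+1)) * (1 - (ζ ^ w)⁻¹ * q ^ (n+1)))) ^ 12) := by
    rw [← Finset.prod_mul_distrib, ← Finset.prod_mul_distrib, ← Finset.prod_mul_distrib]
    apply Finset.prod_congr rfl
    intro w hw
    rw [siegel_eq N w (by omega) τ, mul_pow, mul_pow, mul_pow]
  rw [hsplit]
  -- T1
  have hT1 : ∏ w ∈ Finset.Ico 1 N, (-Complex.exp (2 * (Real.pi:ℂ) * Complex.I * τ * (1/12))) ^ 12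
      = q ^ M := by
    rw [Finset.prod_const, Nat.card_Ico]
    congr 1
    rw [Even.neg_pow (by decide : Even 12), ← Complex.exp_nat_mul]
    congr 1
    push_cast; ring
  -- T2
  have hT2 : ∏ w ∈ Finset.Ico 1 N, Complex.exp (-((Real.pi:ℂ) * Complex.I * w / N)) ^ 12
      = 1 := by
    have hstep : ∀ w ∈ Finset.Ico 1 N,
        Complex.exp (-((Real.pi:ℂ) * Complex.I * w / N)) ^ 12
          = Complex.exp (((12:ℕ):ℂ) * -((Real.pi:ℂ) * Complex.I * w / N)) := by
      intro w _
      rw [Complex.exp_nat_mul]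
    rw [Finset.prod_congr rfl hstep, ← Complex.exp_sum]
    have hS : (∑ w ∈ Finset.Ico 1 N, (w:ℂ)) * 2 = (N:ℂ) * M := by
      have h1 : (∑ w ∈ Finset.Ico 1 N, w) * 2 = N * M := by
        have := Finset.sum_range_id_mul_two N
        rw [Finset.range_eq_Ico] at this
        rw [show (∑ w ∈ Finset.Ico 1 N, w) = ∑ w ∈ Finset.Ico 0 N, w from by
          rw [Finset.sum_eq_sum_Ico_succ_bot (by omega : 0 < N)]; simp]
        rw [this]
        simp [hNdef]
      calc (∑ w ∈ Finset.Ico 1 N, (w:ℂ)) * 2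
          = (((∑ w ∈ Finset.Ico 1 N, w) * 2 : ℕ) : ℂ) := by push_cast; ring
        _ = (N:ℂ) * M := by rw [h1]; push_cast; ring
    have harg : ∑ w ∈ Finset.Ico 1 N, ((12:ℕ):ℂ) * -((Real.pi:ℂ) * Complex.I * w / N)
        = ((-3 * M : ℤ):ℂ) * (2 * (Real.pi:ℂ) * Complex.I) := by
      have hfac : ∑ w ∈ Finset.Ico 1 N, ((12:ℕ):ℂ) * -((Real.pi:ℂ) * Complex.I * w / N)
          = (-(12 * (Real.pi:ℂ) * Complex.I / N)) * ∑ w ∈ Finset.Ico 1 N, (w:ℂ) := by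
        rw [Finset.mul_sum]
        apply Finset.sum_congr rfl
        intro w _
        push_cast; ring
      rw [hfac]
      have h2 : (-(12 * (Real.pi:ℂ) * Complex.I / N)) * ∑ w ∈ Finset.Ico 1 N, (w:ℂ)
          = (-(6 * (Real.pi:ℂ) * Complex.I / N)) * ((∑ w ∈ Finset.Ico 1 N, (w:ℂ)) * 2) := by
        ring
      rw [h2, hS]
      have hM1 : ((M:ℂ) + 1) ≠ 0 := by
        have := hNC; rw [hNdef] at this; push_cast at this; exact_mod_cast this
      push_cast
      field_simp
      ring
    rw [harg, Complex.exp_int_mul_two_pi_mul_I]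
  have hζprim : IsPrimitiveRoot ζ N := by
    rw [hζdef]
    simpa using Complex.isPrimitiveRoot_exp N (by omega)
  have hT3 : ∏ w ∈ Finset.Ico 1 N, (1 - ζ ^ w) ^ 12 = (N:ℂ) ^ 12 := by
    rw [Finset.prod_pow]
    congr 1
    rw [Finset.prod_Ico_eq_prod_range]
    have hM : N - 1 = M := by omega
    rw [hM]
    calc ∏ i ∈ Finset.range M, (1 - ζ ^ (1 + i))
        = ∏ i ∈ Finset.range M, (1 - ζ ^ (i + 1)) :=
          Finset.prod_congr rfl (fun i _ => by rw [add_comm])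
      _ = (M:ℂ) + 1 := IsPrimitiveRoot.prod_one_sub_pow_eq_order (by rw [hNdef] at hζprim; exact hζprim)
      _ = (N:ℂ) := by rw [hNdef]; push_cast; ring
  -- T4
  have hSm : Multipliable (fun n : ℕ => ∏ w ∈ Finset.Ico 1 N,
      ((1 - ζ ^ w * q ^ (n+1)) * (1 - (ζ ^ w)⁻¹ * q ^ (n+1))) ^ 12) :=
    (prodSwap (s := Finset.Ico 1 N)
      (f := fun w n => ((1 - ζ ^ w * q ^ (n+1)) * (1 - (ζ ^ w)⁻¹ * q ^ (n+1))) ^ 12)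
      (fun w _ => (multPow (hmD w) 12).1)).1
  have hT4 : (∏ w ∈ Finset.Ico 1 N, (∏' n : ℕ,
        ((1 - ζ ^ w * q ^ (n+1)) * (1 - (ζ ^ w)⁻¹ * q ^ (n+1)))) ^ 12) *
      (∏' n : ℕ, (1 - q ^ (n+1))) ^ 24
      = (∏' n : ℕ, (1 - (q ^ N) ^ (n+1))) ^ 24 := by
    have hkey : ∀ n : ℕ, (∏ w ∈ Finset.Ico 1 N,
        ((1 - ζ ^ w * q ^ (n+1)) * (1 - (ζ ^ w)⁻¹ * q ^ (n+1))) ^ 12) * (1 - q ^ (n+1)) ^ 24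
          = (1 - (q ^ N) ^ (n+1)) ^ 24 := by
      intro n
      have hqn : ‖q ^ (n+1)‖ < 1 := by
        rw [norm_pow]; exact pow_lt_one₀ (norm_nonneg q) hq (by omega)
      have hx : (1:ℂ) - q ^ (n+1) ≠ 0 := by
        intro h
        have h1 : q ^ (n+1) = 1 := by linear_combination -h
        rw [h1] at hqn
        simp at hqn
      rw [Finset.prod_pow, hζdef, keyProd N (by omega) _ hx]
      have e2 : (q ^ N) ^ (n+1) = q ^ ((n+1) * N) := by rw [← pow_mul, Nat.mul_comm]
      have habs : ∀ a b : ℂ, ((a / b) ^ 2) ^ 12 = a ^ 24 / b ^ 24 := by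
        intro a b
        rw [← pow_mul, div_pow]
      rw [e2, habs, ← pow_mul]
      exact div_mul_cancel₀ _ (pow_ne_zero 24 hx)
    calc (∏ w ∈ Finset.Ico 1 N, (∏' n : ℕ,
          ((1 - ζ ^ w * q ^ (n+1)) * (1 - (ζ ^ w)⁻¹ * q ^ (n+1)))) ^ 12) *
        (∏' n : ℕ, (1 - q ^ (n+1))) ^ 24
        = (∏ w ∈ Finset.Ico 1 N, ∏' n : ℕ,
            ((1 - ζ ^ w * q ^ (n+1)) * (1 - (ζ ^ w)⁻¹ * q ^ (n+1))) ^ 12) *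
          (∏' n : ℕ, (1 - q ^ (n+1)) ^ 24) := by
          rw [(multPow hmq 24).2]
          congr 1
          exact Finset.prod_congr rfl (fun w _ => ((multPow (hmD w) 12).2).symm)
      _ = (∏' n : ℕ, ∏ w ∈ Finset.Ico 1 N,
            ((1 - ζ ^ w * q ^ (n+1)) * (1 - (ζ ^ w)⁻¹ * q ^ (n+1))) ^ 12) *
          (∏' n : ℕ, (1 - q ^ (n+1)) ^ 24) := by
          rw [(prodSwap (s := Finset.Ico 1 N)
            (f := fun w n => ((1 - ζ ^ w * q ^ (n+1)) * (1 - (ζ ^ w)⁻¹ * q ^ (n+1))) ^ 12)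
            (fun w _ => (multPow (hmD w) 12).1)).2]
      _ = ∏' n : ℕ, ((∏ w ∈ Finset.Ico 1 N,
            ((1 - ζ ^ w * q ^ (n+1)) * (1 - (ζ ^ w)⁻¹ * q ^ (n+1))) ^ 12) *
            (1 - q ^ (n+1)) ^ 24) := (hSm.tprod_mul (multPow hmq 24).1).symm
      _ = ∏' n : ℕ, (1 - (q ^ N) ^ (n+1)) ^ 24 := tprod_congr hkey
      _ = (∏' n : ℕ, (1 - (q ^ N) ^ (n+1))) ^ 24 := (multPow hmQ 24).2
  rw [hT1, hT2, hT3, hDq, hDQ]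
  have hq0 : q ≠ 0 := Complex.exp_ne_zero _
  have h2pi : (2 * (Real.pi:ℂ) * Complex.I) ≠ 0 := by
    simp [Real.pi_ne_zero, Complex.I_ne_zero]
  have hpow : q ^ N = q ^ M * q := by rw [hNdef, pow_succ]
  have hden : (2 * (Real.pi:ℂ) * Complex.I) ^ 12 * q * (∏' n : ℕ, (1 - q ^ (n+1))) ^ 24 ≠ 0 :=
    mul_ne_zero (mul_ne_zero (pow_ne_zero _ h2pi) hq0) (pow_ne_zero _ hPq)
  rw [eq_div_iff hden]
  rw [hpow] at hT4 ⊢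
  linear_combination ((N:ℕ):ℂ) ^ 12 * (2 * (Real.pi:ℂ) * Complex.I) ^ 12 * q ^ M * q * hT4
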